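/- Let Z := min{c, e^{X_τ} − 1} − g/n. Then E_Q[Z] = c − g/n + e^{−λτ} Σ_{m=0}^∞ ( (λτ)^m / m! ) [ exp{ (γ + σ²/2)τ + (μ + δ²/2)m } · Φ(κ₁^m) − (1+c) Φ(κ₂^m) ], where κ₁^m := ( ln(1+c) − γτ − mμ − σ²τ − mδ² ) / √(σ²τ + mδ²) and κ₂^m := ( ln(1+c) − γτ − mμ ) / √(σ²τ + mδ²). -/

import Mathlib

open MeasureTheory ProbabilityTheory

noncomputable section

/-- Codomains of the combined family `(W, N, Y₀, Y₁, …)`: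
the first component is the Brownian value (real), the second the Poisson count (natural),
and the remaining ones the jump amplitudes (real). -/
def JDTy : Unit ⊕ Unit ⊕ ℕ → Type
  | Sum.inl _ => ℝ
  | Sum.inr (Sum.inl _) => ℕ
  | Sum.inr (Sum.inr _) => ℝ

instance JDTy.instMeasurableSpace : ∀ i, MeasurableSpace (JDTy i)
  | Sum.inl _ => inferInstanceAs (MeasurableSpace ℝ)
  | Sum.inr (Sum.inl _) => inferInstanceAs (MeasurableSpace ℕ)
  | Sum.inr (Sum.inr _) => inferInstanceAs (MeasurableSpace ℝ)

/-- The combined family of random variables `(W, N, Y₀, Y₁, …)`. -/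
def JDFam {Ω : Type*} (W : Ω → ℝ) (N : Ω → ℕ) (Y : ℕ → Ω → ℝ) : ∀ i, Ω → JDTy i
  | Sum.inl _ => W
  | Sum.inr (Sum.inl _) => N
  | Sum.inr (Sum.inr j) => Y j

/-- Standard normal cumulative distribution function Φ. -/
def stdNormCDF (x : ℝ) : ℝ :=
  ∫ u in Set.Iic x, (Real.sqrt (2 * Real.pi))⁻¹ * Real.exp (-u ^ 2 / 2)

/-! ### Auxiliary lemmas -/

open Real
open scoped NNReal ENNReal

section Aux

lemma gpdf_factor (a b : ℝ) (v w : ℝ≥0) (hv : v ≠ 0) (hw : w ≠ 0) (y x : ℝ) :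
    gaussianPDFReal a v x * gaussianPDFReal b w (y - x) =
      gaussianPDFReal (a + b) (v + w) y *
        gaussianPDFReal (a + (v : ℝ) * (y - a - b) / ((v : ℝ) + (w : ℝ))) (v * w / (v + w)) x := by
  have hv' : (0:ℝ) < v := lt_of_le_of_ne v.coe_nonneg (by exact_mod_cast (Ne.symm hv))
  have hw' : (0:ℝ) < w := lt_of_le_of_ne w.coe_nonneg (by exact_mod_cast (Ne.symm hw))
  have hvw : (0:ℝ) < (v:ℝ) + w := by linarith
  have hV : ((v * w / (v + w) : ℝ≥0) : ℝ) = (v:ℝ) * w / ((v:ℝ) + w) := by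
    push_cast [NNReal.coe_div]
    ring_nf
  simp only [gaussianPDFReal, hV, NNReal.coe_add]
  rw [mul_mul_mul_comm, ← Real.exp_add, mul_mul_mul_comm, ← Real.exp_add]
  have hπ : (0:ℝ) < 2 * π := by positivity
  congr 1
  · rw [← mul_inv, ← mul_inv, ← Real.sqrt_mul (by positivity), ← Real.sqrt_mul (by positivity)]
    congr 2
    field_simp
  · congr 1
    field_simp
    ring

lemma gpdf_conv (a b : ℝ) (v w : ℝ≥0) (hv : v ≠ 0) (hw : w ≠ 0) (y : ℝ) :
    ∫ x, gaussianPDFReal a v x * gaussianPDFReal b w (y - x) =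
      gaussianPDFReal (a + b) (v + w) y := by
  have hV : (v * w / (v + w) : ℝ≥0) ≠ 0 := by
    refine div_ne_zero (mul_ne_zero hv hw) ?_
    simp [hv]
  calc ∫ x, gaussianPDFReal a v x * gaussianPDFReal b w (y - x)
      = ∫ x, gaussianPDFReal (a + b) (v + w) y *
          gaussianPDFReal (a + (v : ℝ) * (y - a - b) / ((v : ℝ) + (w : ℝ))) (v * w / (v + w)) x := by
        simp_rw [gpdf_factor a b v w hv hw y]
    _ = gaussianPDFReal (a + b) (v + w) y * ∫ x,
          gaussianPDFReal (a + (v : ℝ) * (y - a - b) / ((v : ℝ) + (w : ℝ))) (v * w / (v + w)) x := by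
        rw [integral_const_mul]
    _ = _ := by rw [integral_gaussianPDFReal_eq_one _ hV, mul_one]

lemma gpdf_le (b : ℝ) (w : ℝ≥0) (z : ℝ) :
    gaussianPDFReal b w z ≤ (Real.sqrt (2 * π * w))⁻¹ := by
  rw [gaussianPDFReal]
  have h1 : Real.exp (-(z - b) ^ 2 / (2 * w)) ≤ 1 := by
    rw [Real.exp_le_one_iff]
    apply div_nonpos_of_nonpos_of_nonneg
    · simp [sq_nonneg]
    · positivity
  nlinarith [Real.sqrt_nonneg (2 * π * w), inv_nonneg.2 (Real.sqrt_nonneg (2 * π * w))]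

lemma integrable_gpdf_mul (a b : ℝ) (v w : ℝ≥0) (y : ℝ) :
    Integrable (fun x => gaussianPDFReal a v x * gaussianPDFReal b w (y - x)) := by
  have h := Integrable.bdd_mul (f := fun x => gaussianPDFReal b w (y - x))
    (integrable_gaussianPDFReal a v)
    ((measurable_gaussianPDFReal b w).comp (measurable_const.sub measurable_id)).aestronglyMeasurable
    (c := (Real.sqrt (2 * π * w))⁻¹) (ae_of_all _ fun x => by
      rw [Real.norm_eq_abs, abs_of_nonneg (gaussianPDFReal_nonneg _ _ _)]
      exact gpdf_le b w _)
  simpa [mul_comm] using h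

lemma lintegral_gpdf_conv (a b : ℝ) (v w : ℝ≥0) (hv : v ≠ 0) (hw : w ≠ 0) (y : ℝ) :
    ∫⁻ x, gaussianPDF a v x * gaussianPDF b w (y - x) = gaussianPDF (a + b) (v + w) y := by
  simp_rw [gaussianPDF, ← ENNReal.ofReal_mul (gaussianPDFReal_nonneg a v _)]
  rw [← ofReal_integral_eq_lintegral_ofReal (integrable_gpdf_mul a b v w y)
    (ae_of_all _ fun x => mul_nonneg (gaussianPDFReal_nonneg _ _ _) (gaussianPDFReal_nonneg _ _ _)),
    gpdf_conv a b v w hv hw y]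

lemma gaussianReal_conv (a b : ℝ) (v w : ℝ≥0) (hv : v ≠ 0) (hw : w ≠ 0) :
    Measure.map (fun p : ℝ × ℝ => p.1 + p.2) ((gaussianReal a v).prod (gaussianReal b w))
      = gaussianReal (a + b) (v + w) := by
  have hvw : v + w ≠ 0 := by simp [hv]
  ext s hs
  rw [Measure.map_apply measurable_add hs, gaussianReal_of_var_ne_zero a hv,
    gaussianReal_of_var_ne_zero b hw, gaussianReal_of_var_ne_zero _ hvw]
  have ht : MeasurableSet ((fun p : ℝ × ℝ => p.1 + p.2) ⁻¹' s) := measurable_add hs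
  rw [Measure.prod_apply ht, withDensity_apply _ hs]
  have h1 : ∀ x : ℝ, (volume.withDensity (gaussianPDF b w)) (Prod.mk x ⁻¹' ((fun p : ℝ × ℝ => p.1 + p.2) ⁻¹' s))
      = ∫⁻ y, s.indicator 1 (x + y) * gaussianPDF b w y := by
    intro x
    rw [withDensity_apply _ (measurable_prodMk_left ht),
      ← lintegral_indicator (measurable_prodMk_left ht)]
    congr 1
    ext y
    by_cases h : x + y ∈ s <;> simp [Set.indicator, h]
  simp_rw [h1]
  rw [lintegral_withDensity_eq_lintegral_mul _ (measurable_gaussianPDF a v)]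
  swap
  · apply Measurable.lintegral_prod_right' (f := fun p : ℝ × ℝ => s.indicator 1 (p.1 + p.2) * gaussianPDF b w p.2)
    exact ((measurable_one.indicator hs).comp measurable_add).mul ((measurable_gaussianPDF b w).comp measurable_snd)
  have h2 : ∀ x : ℝ, (gaussianPDF a v * fun x => ∫⁻ y, s.indicator 1 (x + y) * gaussianPDF b w y) x
      = ∫⁻ y, s.indicator 1 y * (gaussianPDF a v x * gaussianPDF b w (y - x)) := by
    intro x
    simp only [Pi.mul_apply]
    rw [← lintegral_const_mul' _ _ (by simp [gaussianPDF])]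
    have heq : ∀ y : ℝ, gaussianPDF a v x * (s.indicator 1 (x + y) * gaussianPDF b w y)
        = (fun z => s.indicator 1 z * (gaussianPDF a v x * gaussianPDF b w (z - x))) (y + x) := by
      intro y
      simp only [add_sub_cancel_right, add_comm y x]
      ring_nf
    simp_rw [heq]
    exact lintegral_add_right_eq_self (μ := volume) (fun z => s.indicator 1 z * (gaussianPDF a v x * gaussianPDF b w (z - x))) x
  simp_rw [h2]
  rw [lintegral_lintegral_swap]
  swap
  · apply Measurable.aemeasurable
    apply Measurable.mul
    · exact (measurable_one.indicator hs).comp measurable_snd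
    · exact ((measurable_gaussianPDF a v).comp measurable_fst).mul
        ((measurable_gaussianPDF b w).comp (measurable_snd.sub measurable_fst))
  have h3 : ∀ y : ℝ, ∫⁻ x, s.indicator 1 y * (gaussianPDF a v x * gaussianPDF b w (y - x))
      = s.indicator (gaussianPDF (a + b) (v + w)) y := by
    intro y
    rw [lintegral_const_mul' _ _ (by
      by_cases h : y ∈ s <;> simp [Set.indicator, h])]
    rw [lintegral_gpdf_conv a b v w hv hw y]
    by_cases h : y ∈ s <;> simp [Set.indicator, h]
  simp_rw [h3]
  rw [lintegral_indicator hs]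

lemma map_add_gaussian {Ω : Type*} [MeasurableSpace Ω] {Q : Measure Ω} [IsProbabilityMeasure Q]
    {U V : Ω → ℝ} {a b : ℝ} {v w : ℝ≥0} (hv : v ≠ 0) (hw : w ≠ 0)
    (hU : Measure.map U Q = gaussianReal a v) (hV : Measure.map V Q = gaussianReal b w)
    (h : IndepFun U V Q) :
    Measure.map (fun ω => U ω + V ω) Q = gaussianReal (a + b) (v + w) := by
  have hUm : AEMeasurable U Q := aemeasurable_of_map_neZero (by rw [hU]; infer_instance)
  have hVm : AEMeasurable V Q := aemeasurable_of_map_neZero (by rw [hV]; infer_instance)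
  have hmap : Q.map (fun ω => (U ω, V ω)) = (Q.map U).prod (Q.map V) :=
    (indepFun_iff_map_prod_eq_prod_map_map hUm hVm).1 h
  have : (fun ω => U ω + V ω) = (fun p : ℝ × ℝ => p.1 + p.2) ∘ (fun ω => (U ω, V ω)) := rfl
  rw [this, ← AEMeasurable.map_map_of_aemeasurable measurable_add.aemeasurable (hUm.prodMk hVm),
    hmap, hU, hV, gaussianReal_conv a b v w hv hw]

lemma stdNormCDF_eq (x : ℝ) :
    stdNormCDF x = ∫ u in Set.Iic x, gaussianPDFReal 0 1 u := by
  unfold stdNormCDF gaussianPDFReal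
  norm_num

lemma stdNormCDF_nonneg (x : ℝ) : 0 ≤ stdNormCDF x := by
  rw [stdNormCDF_eq]
  exact setIntegral_nonneg measurableSet_Iic fun u _ => gaussianPDFReal_nonneg 0 1 u

lemma stdNormCDF_le_one (x : ℝ) : stdNormCDF x ≤ 1 := by
  rw [stdNormCDF_eq, ← integral_gaussianPDFReal_eq_one 0 one_ne_zero]
  exact setIntegral_le_integral (integrable_gaussianPDFReal 0 1)
    (ae_of_all _ (gaussianPDFReal_nonneg 0 1))

lemma min_eq_sub_max (c t : ℝ) : min c t = c - max (c - t) 0 := by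
  rcases le_total c t with h | h <;> simp [min_def, max_def, h] <;> intro h2 <;> linarith

lemma key_integral (a : ℝ) (v : ℝ≥0) (hv : v ≠ 0) (c : ℝ) (hc : 0 ≤ c) :
    ∫ z, min c (Real.exp z - 1) ∂(gaussianReal a v)
      = c - (1 + c) * stdNormCDF ((Real.log (1 + c) - a) / Real.sqrt v)
          + Real.exp (a + v / 2) * stdNormCDF ((Real.log (1 + c) - a - v) / Real.sqrt v) := by
  have hv' : (0:ℝ) < v := lt_of_le_of_ne v.coe_nonneg (by exact_mod_cast (Ne.symm hv))
  set s : ℝ := Real.sqrt v with hs_def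
  have hs : 0 < s := Real.sqrt_pos.2 hv'
  have hs2 : s ^ 2 = v := Real.sq_sqrt hv'.le
  have hK : (0:ℝ) < 1 + c := by linarith
  set κ : ℝ := (Real.log (1 + c) - a) / s with hκ_def
  have h1 : Measure.map (fun u : ℝ => s * u) (gaussianReal 0 1) = gaussianReal 0 v := by
    rw [show (fun u : ℝ => s * u) = (s * ·) from rfl, gaussianReal_map_const_mul]
    congr 1
    · ring
    · ext
      push_cast
      rw [hs2]
      ring
  have h2 : Measure.map (fun u : ℝ => s * u + a) (gaussianReal 0 1) = gaussianReal a v := by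
    have : (fun u : ℝ => s * u + a) = (· + a) ∘ (fun u : ℝ => s * u) := rfl
    rw [this, ← Measure.map_map (measurable_add_const a) (measurable_const_mul s), h1,
      gaussianReal_map_add_const a, zero_add]
  have hf_cont : Continuous (fun z : ℝ => min c (Real.exp z - 1)) :=
    continuous_const.min (Real.continuous_exp.sub continuous_const)
  rw [← h2, integral_map ((measurable_const_mul s).add_const a).aemeasurable
    hf_cont.aestronglyMeasurable]
  rw [gaussianReal_of_var_ne_zero 0 one_ne_zero]
  have hd : (gaussianPDF 0 1) = fun x => ((Real.toNNReal (gaussianPDFReal 0 1 x) : ℝ≥0) : ℝ≥0∞) := rfl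
  rw [hd, integral_withDensity_eq_integral_smul (measurable_gaussianPDFReal 0 1).real_toNNReal]
  have hsmul : ∀ u : ℝ, (Real.toNNReal (gaussianPDFReal 0 1 u)) • min c (Real.exp (s * u + a) - 1)
      = gaussianPDFReal 0 1 u * min c (Real.exp (s * u + a) - 1) := by
    intro u
    rw [NNReal.smul_def, smul_eq_mul, Real.coe_toNNReal _ (gaussianPDFReal_nonneg 0 1 u)]
  simp_rw [hsmul]
  have hpt : ∀ u : ℝ, gaussianPDFReal 0 1 u * min c (Real.exp (s * u + a) - 1)
      = gaussianPDFReal 0 1 u * c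
        - gaussianPDFReal 0 1 u * max (1 + c - Real.exp (s * u + a)) 0 := by
    intro u
    rw [min_eq_sub_max]
    have : c - (Real.exp (s * u + a) - 1) = 1 + c - Real.exp (s * u + a) := by ring
    rw [this]
    ring
  simp_rw [hpt]
  have hbd : ∀ u : ℝ, ‖max (1 + c - Real.exp (s * u + a)) 0‖ ≤ 1 + c := by
    intro u
    rw [Real.norm_eq_abs, abs_of_nonneg (le_max_right _ _)]
    have := Real.exp_pos (s * u + a)
    rcases le_total (1 + c - Real.exp (s * u + a)) 0 with h | h <;> simp [max_def, h] <;> linarith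
  have hmax_meas : Measurable fun u : ℝ => max (1 + c - Real.exp (s * u + a)) 0 :=
    ((continuous_const.sub (Real.continuous_exp.comp
      ((continuous_const.mul continuous_id).add continuous_const))).max continuous_const).measurable
  have hIb : Integrable (fun u => gaussianPDFReal 0 1 u * max (1 + c - Real.exp (s * u + a)) 0) := by
    have h := Integrable.bdd_mul (f := fun u : ℝ => max (1 + c - Real.exp (s * u + a)) 0)
      (integrable_gaussianPDFReal 0 1) hmax_meas.aestronglyMeasurable (c := 1 + c) (ae_of_all _ hbd)
    simpa [mul_comm] using h
  rw [integral_sub ((integrable_gaussianPDFReal 0 1).mul_const c) hIb]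
  rw [integral_mul_const, integral_gaussianPDFReal_eq_one 0 one_ne_zero, one_mul]
  have hexp_pdf : ∀ u : ℝ, Real.exp (a + v / 2) * gaussianPDFReal s 1 u
      = Real.exp (s * u + a) * gaussianPDFReal 0 1 u := by
    intro u
    unfold gaussianPDFReal
    rw [mul_left_comm, ← Real.exp_add, mul_left_comm, ← Real.exp_add]
    congr 1
    have hv2 : (v:ℝ) = s ^ 2 := hs2.symm
    rw [hv2]
    push_cast
    ring
  have hind : ∀ u : ℝ, gaussianPDFReal 0 1 u * max (1 + c - Real.exp (s * u + a)) 0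
      = (Set.Iic κ).indicator
          (fun u => (1 + c) * gaussianPDFReal 0 1 u - Real.exp (a + v / 2) * gaussianPDFReal s 1 u) u := by
    intro u
    by_cases h : u ≤ κ
    · have hle : Real.exp (s * u + a) ≤ 1 + c := by
        rw [← Real.exp_log hK]
        apply Real.exp_le_exp.2
        rw [hκ_def] at h
        have h' := (le_div_iff₀ hs).1 h
        have h'' : u * s = s * u := mul_comm u s
        linarith
      rw [Set.indicator_of_mem (Set.mem_Iic.2 h), hexp_pdf u]
      rw [max_eq_left (by linarith)]
      ring
    · push_neg at h
      have hgt : 1 + c < Real.exp (s * u + a) := by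
        rw [← Real.exp_log hK]
        apply Real.exp_lt_exp.2
        rw [hκ_def] at h
        have h' := (div_lt_iff₀ hs).1 h
        have h'' : u * s = s * u := mul_comm u s
        linarith
      rw [Set.indicator_of_notMem (by simpa using h)]
      rw [max_eq_right (by linarith)]
      ring
  simp_rw [hind]
  rw [integral_indicator measurableSet_Iic]
  rw [integral_sub (((integrable_gaussianPDFReal 0 1).const_mul _).integrableOn)
    (((integrable_gaussianPDFReal s 1).const_mul _).integrableOn)]
  rw [integral_const_mul, integral_const_mul]
  have hA : ∫ u in Set.Iic κ, gaussianPDFReal 0 1 u = stdNormCDF κ := (stdNormCDF_eq κ).symm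
  have hshift : ∀ u : ℝ, gaussianPDFReal s 1 u = gaussianPDFReal 0 1 (u - s) := by
    intro u
    rw [gaussianPDFReal_sub, zero_add]
  have hB : ∫ u in Set.Iic κ, gaussianPDFReal s 1 u = stdNormCDF (κ - s) := by
    simp_rw [hshift]
    rw [← integral_indicator measurableSet_Iic]
    have : ∀ u : ℝ, (Set.Iic κ).indicator (fun u => gaussianPDFReal 0 1 (u - s)) u
        = (Set.Iic (κ - s)).indicator (gaussianPDFReal 0 1) (u - s) := by
      intro u
      simp only [Set.indicator_apply, Set.mem_Iic, sub_le_sub_iff_right]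
    simp_rw [this]
    rw [integral_sub_right_eq_self ((Set.Iic (κ - s)).indicator (gaussianPDFReal 0 1)) s]
    rw [integral_indicator measurableSet_Iic, stdNormCDF_eq]
  rw [hA, hB]
  have hκs : κ - s = (Real.log (1 + c) - a - v) / s := by
    rw [hκ_def]
    field_simp
    nlinarith [hs2]
  rw [hκs]
  ring

lemma iIndepFun_congr_ae {Ω ι : Type*} [MeasurableSpace Ω] {μ : Measure Ω}
    {β : ι → Type*} {m : ∀ i, MeasurableSpace (β i)} {f f' : ∀ i, Ω → β i}
    (hf : iIndepFun (m := m) f μ) (h : ∀ i, f i =ᵐ[μ] f' i) : iIndepFun (m := m) f' μ := by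
  rw [iIndepFun_iff_measure_inter_preimage_eq_mul] at hf ⊢
  intro S sets H
  have hE : ∀ᵐ ω ∂μ, ∀ i ∈ S, f i ω = f' i ω := by
    rw [Filter.eventually_all_finset]
    exact fun i _ => h i
  have h1 : μ (⋂ i ∈ S, f' i ⁻¹' sets i) = μ (⋂ i ∈ S, f i ⁻¹' sets i) := by
    apply measure_congr
    rw [Filter.eventuallyEq_set]
    filter_upwards [hE] with ω hω
    simp only [Set.mem_iInter, Set.mem_preimage]
    constructor <;> intro hh i hi
    · rw [hω i hi]; exact hh i hi
    · rw [← hω i hi]; exact hh i hi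
  rw [h1, hf S H]
  refine Finset.prod_congr rfl fun i hi => ?_
  apply measure_congr
  rw [Filter.eventuallyEq_set]
  filter_upwards [h i] with ω hω
  simp [Set.mem_preimage, hω]

variable {Ω : Type*} [MeasurableSpace Ω] {Q : Measure Ω} [IsProbabilityMeasure Q]
  {W' : Ω → ℝ} {N' : Ω → ℕ} {Y' : ℕ → Ω → ℝ}

lemma JDFam_meas (hW : Measurable W') (hN : Measurable N') (hY : ∀ j, Measurable (Y' j)) :
    ∀ i, Measurable (JDFam W' N' Y' i) := by
  intro i
  rcases i with u | u | j
  · exact hW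
  · exact hN
  · exact hY j

/-- index finset for `σ W + ∑_{j<m} Y j` -/
def Sfin (m : ℕ) : Finset (Unit ⊕ Unit ⊕ ℕ) :=
  insert (Sum.inl ()) ((Finset.range m).image (fun j => Sum.inr (Sum.inr j)))

lemma mem0 (m : ℕ) : Sum.inl () ∈ Sfin m := Finset.mem_insert_self _ _

lemma memj {m j : ℕ} (hj : j ∈ Finset.range m) : (Sum.inr (Sum.inr j) : Unit ⊕ Unit ⊕ ℕ) ∈ Sfin m :=
  Finset.mem_insert_of_mem (Finset.mem_image_of_mem _ hj)

def get0 (m : ℕ) (x : ∀ i : (Sfin m : Finset (Unit ⊕ Unit ⊕ ℕ)), JDTy i) : ℝ :=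
  x ⟨Sum.inl (), mem0 m⟩

def getj (m : ℕ) (j : {j // j ∈ Finset.range m}) (x : ∀ i : (Sfin m : Finset (Unit ⊕ Unit ⊕ ℕ)), JDTy i) : ℝ :=
  x ⟨Sum.inr (Sum.inr j.1), memj j.2⟩

def getY (m : ℕ) (x : ∀ i : (({Sum.inr (Sum.inr m)} : Finset (Unit ⊕ Unit ⊕ ℕ)) : Finset (Unit ⊕ Unit ⊕ ℕ)), JDTy i) : ℝ :=
  x ⟨Sum.inr (Sum.inr m), Finset.mem_singleton_self _⟩

def getN (x : ∀ i : (({Sum.inr (Sum.inl ())} : Finset (Unit ⊕ Unit ⊕ ℕ)) : Finset (Unit ⊕ Unit ⊕ ℕ)), JDTy i) : ℕ :=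
  x ⟨Sum.inr (Sum.inl ()), Finset.mem_singleton_self _⟩

def φS (σ : ℝ) (m : ℕ) (x : ∀ i : (Sfin m : Finset (Unit ⊕ Unit ⊕ ℕ)), JDTy i) : ℝ :=
  σ * get0 m x + ∑ j ∈ (Finset.range m).attach, getj m j x

lemma get0_meas (m : ℕ) : Measurable (get0 m) := by
  unfold get0; exact measurable_pi_apply _

lemma getj_meas (m : ℕ) (j : {j // j ∈ Finset.range m}) : Measurable (getj m j) := by
  unfold getj; exact measurable_pi_apply _

lemma φS_meas (σ : ℝ) (m : ℕ) : Measurable (φS σ m) := by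
  unfold φS
  exact ((get0_meas m).const_mul σ).add (Finset.measurable_sum _ fun j _ => getj_meas m j)

lemma getY_meas (m : ℕ) : Measurable (getY m) := by
  unfold getY; exact measurable_pi_apply _

lemma getN_meas : Measurable getN := by
  unfold getN; exact measurable_pi_apply _

lemma φS_comp (σ : ℝ) (m : ℕ) :
    (φS σ m ∘ fun ω (i : (Sfin m : Finset (Unit ⊕ Unit ⊕ ℕ))) => JDFam W' N' Y' i ω)
      = fun ω => σ * W' ω + ∑ j ∈ Finset.range m, Y' j ω := by
  funext ω
  simp only [Function.comp_apply, φS, get0, getj]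
  congr 1
  exact Finset.sum_attach (Finset.range m) (fun j => Y' j ω)

lemma indep_S_Y (hW : Measurable W') (hN : Measurable N') (hY : ∀ j, Measurable (Y' j))
    (hIndep : iIndepFun (m := JDTy.instMeasurableSpace) (JDFam W' N' Y') Q) (σ : ℝ) (m : ℕ) :
    IndepFun (fun ω => σ * W' ω + ∑ j ∈ Finset.range m, Y' j ω) (Y' m) Q := by
  have hdisj : Disjoint (Sfin m) ({Sum.inr (Sum.inr m)} : Finset (Unit ⊕ Unit ⊕ ℕ)) := by
    rw [Finset.disjoint_singleton_right]
    simp only [Sfin, Finset.mem_insert, Finset.mem_image, Finset.mem_range]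
    push_neg
    refine ⟨by simp, fun j hj => by simp; omega⟩
  have base := hIndep.indepFun_finset (Sfin m) {Sum.inr (Sum.inr m)} hdisj (JDFam_meas hW hN hY)
  have h := base.comp (φS_meas σ m) (getY_meas m)
  rw [φS_comp] at h
  exact h

lemma indep_N_S (hW : Measurable W') (hN : Measurable N') (hY : ∀ j, Measurable (Y' j))
    (hIndep : iIndepFun (m := JDTy.instMeasurableSpace) (JDFam W' N' Y') Q) (σ : ℝ) (m : ℕ) :
    IndepFun N' (fun ω => σ * W' ω + ∑ j ∈ Finset.range m, Y' j ω) Q := by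
  have hdisj : Disjoint ({Sum.inr (Sum.inl ())} : Finset (Unit ⊕ Unit ⊕ ℕ)) (Sfin m) := by
    rw [Finset.disjoint_singleton_left]
    simp [Sfin]
  have base := hIndep.indepFun_finset {Sum.inr (Sum.inl ())} (Sfin m) hdisj (JDFam_meas hW hN hY)
  have h := base.comp getN_meas (φS_meas σ m)
  rw [φS_comp] at h
  exact h

lemma law_S {σ δ tau μ : ℝ} (hσ : 0 < σ) (hδ : 0 < δ) (htau : 0 < tau)
    (hW : Measurable W') (hN : Measurable N') (hY : ∀ j, Measurable (Y' j))
    (hIndep : iIndepFun (m := JDTy.instMeasurableSpace) (JDFam W' N' Y') Q)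
    (hWlaw : Measure.map W' Q = gaussianReal 0 tau.toNNReal)
    (hYlaw : ∀ j, Measure.map (Y' j) Q = gaussianReal μ ((δ ^ 2).toNNReal)) (m : ℕ) :
    Measure.map (fun ω => σ * W' ω + ∑ j ∈ Finset.range m, Y' j ω) Q
      = gaussianReal (m * μ) ((σ ^ 2 * tau + m * δ ^ 2).toNNReal) := by
  induction m with
  | zero =>
    have h0 : (fun ω => σ * W' ω + ∑ j ∈ Finset.range 0, Y' j ω) = (σ * ·) ∘ W' := by
      funext ω; simp
    rw [h0, ← Measure.map_map (measurable_const_mul σ) hW, hWlaw, gaussianReal_map_const_mul]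
    congr 1
    · simp
    · ext
      simp only [NNReal.coe_mul, NNReal.coe_mk, Real.coe_toNNReal _ htau.le]
      rw [Real.coe_toNNReal _ (by positivity)]
      push_cast
      ring
  | succ m ih =>
    have h1 : (fun ω => σ * W' ω + ∑ j ∈ Finset.range (m + 1), Y' j ω)
        = fun ω => (σ * W' ω + ∑ j ∈ Finset.range m, Y' j ω) + Y' m ω := by
      funext ω
      rw [Finset.sum_range_succ]
      ring
    rw [h1]
    have hv : (σ ^ 2 * tau + m * δ ^ 2).toNNReal ≠ 0 := by
      simp only [ne_eq, Real.toNNReal_eq_zero, not_le]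
      positivity
    have hw : (δ ^ 2).toNNReal ≠ 0 := by
      simp only [ne_eq, Real.toNNReal_eq_zero, not_le]
      positivity
    rw [map_add_gaussian hv hw ih (hYlaw m) (indep_S_Y hW hN hY hIndep σ m)]
    congr 1
    · push_cast
      ring
    · ext
      rw [NNReal.coe_add, Real.coe_toNNReal _ (by positivity), Real.coe_toNNReal _ (by positivity),
        Real.coe_toNNReal _ (by positivity)]
      push_cast
      ring

lemma abs_min_le (c : ℝ) (hc : 0 ≤ c) (x : ℝ) : |min c (Real.exp x - 1)| ≤ max c 1 := by
  rw [abs_le]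
  constructor
  · apply le_min
    · linarith [le_max_left c 1]
    · have := Real.exp_pos x
      have := le_max_right c 1
      linarith
  · exact le_trans (min_le_left _ _) (le_max_left _ _)

end Aux

/-- closed form of the first moment of `Z`. -/
theorem stmt16
    {Ω : Type*} [MeasurableSpace Ω] (Q : Measure Ω) [IsProbabilityMeasure Q]
    (γ μ σ δ lam tau : ℝ) (hσ : 0 < σ) (hδ : 0 < δ) (hlam : 0 < lam) (htau : 0 < tau)
    (W : Ω → ℝ) (N : Ω → ℕ) (Y : ℕ → Ω → ℝ)
    (hW : Measure.map W Q = gaussianReal 0 (tau).toNNReal)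
    (hN : Measure.map N Q = poissonMeasure (lam * tau).toNNReal)
    (hY : ∀ j, Measure.map (Y j) Q = gaussianReal μ (δ ^ 2).toNNReal)
    (hIndep : iIndepFun (m := JDTy.instMeasurableSpace) (JDFam W N Y) Q)
    (X : Ω → ℝ) (hX : ∀ ω, X ω = γ * tau + σ * W ω + ∑ j ∈ Finset.range (N ω), Y j ω)
    (c g : ℝ) (hc : 0 ≤ c) (n : ℕ) (hn : 1 ≤ n)
    (Z : Ω → ℝ) (hZ : ∀ ω, Z ω = min c (Real.exp (X ω) - 1) - g / n)
    : ∫ ω, Z ω ∂Q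
      = c - g / n + Real.exp (-(lam * tau)) * ∑' m : ℕ,
          (lam * tau) ^ m / (m.factorial : ℝ) *
            (Real.exp ((γ + σ ^ 2 / 2) * tau + (μ + δ ^ 2 / 2) * m) *
                stdNormCDF ((Real.log (1 + c) - γ * tau - m * μ - σ ^ 2 * tau - m * δ ^ 2) /
                  Real.sqrt (σ ^ 2 * tau + m * δ ^ 2))
              - (1 + c) * stdNormCDF ((Real.log (1 + c) - γ * tau - m * μ) /
                  Real.sqrt (σ ^ 2 * tau + m * δ ^ 2))) := by
  classical
  -- measurable modifications
  have hWae : AEMeasurable W Q := aemeasurable_of_map_neZero (by rw [hW]; infer_instance)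
  have hNae : AEMeasurable N Q := aemeasurable_of_map_neZero (by rw [hN]; infer_instance)
  have hYae : ∀ j, AEMeasurable (Y j) Q := fun j =>
    aemeasurable_of_map_neZero (by rw [hY j]; infer_instance)
  set W' := hWae.mk W with hW'def
  set N' := hNae.mk N with hN'def
  set Y' : ℕ → Ω → ℝ := fun j => (hYae j).mk (Y j) with hY'def
  have hW'm : Measurable W' := hWae.measurable_mk
  have hN'm : Measurable N' := hNae.measurable_mk
  have hY'm : ∀ j, Measurable (Y' j) := fun j => (hYae j).measurable_mk
  have hWW' : W =ᵐ[Q] W' := hWae.ae_eq_mk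
  have hNN' : N =ᵐ[Q] N' := hNae.ae_eq_mk
  have hYY' : ∀ j, Y j =ᵐ[Q] Y' j := fun j => (hYae j).ae_eq_mk
  have hW'law : Measure.map W' Q = gaussianReal 0 tau.toNNReal := by
    rw [← Measure.map_congr hWW']; exact hW
  have hN'law : Measure.map N' Q = poissonMeasure (lam * tau).toNNReal := by
    rw [← Measure.map_congr hNN']; exact hN
  have hY'law : ∀ j, Measure.map (Y' j) Q = gaussianReal μ ((δ ^ 2).toNNReal) := fun j => by
    rw [← Measure.map_congr (hYY' j)]; exact hY j
  have hIndep' : iIndepFun (m := JDTy.instMeasurableSpace) (JDFam W' N' Y') Q := by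
    refine iIndepFun_congr_ae hIndep fun i => ?_
    rcases i with u | u | j
    · exact hWW'
    · exact hNN'
    · exact hYY' j
  -- the partial sums and their laws
  set Sm : ℕ → Ω → ℝ := fun m ω => σ * W' ω + ∑ j ∈ Finset.range m, Y' j ω with hSm_def
  have hSm_meas : ∀ m, Measurable (Sm m) := fun m =>
    (hW'm.const_mul σ).add (Finset.measurable_sum _ fun j _ => hY'm j)
  have hSm_law : ∀ m : ℕ, Measure.map (Sm m) Q
      = gaussianReal (m * μ) ((σ ^ 2 * tau + m * δ ^ 2).toNNReal) :=
    law_S hσ hδ htau hW'm hN'm hY'm hIndep' hW'law hY'law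
  -- the payoff function
  set φ2 : ℝ → ℝ := fun x => min c (Real.exp (γ * tau + x) - 1) - g / n with hφ2_def
  have hφ2_meas : Measurable φ2 :=
    ((continuous_const.min ((Real.continuous_exp.comp
      (continuous_const.add continuous_id)).sub continuous_const)).sub continuous_const).measurable
  set C : ℝ := max c 1 + |g / (n:ℝ)| with hC_def
  have hφ2_bd : ∀ x, ‖φ2 x‖ ≤ C := by
    intro x
    calc ‖φ2 x‖ ≤ |min c (Real.exp (γ * tau + x) - 1)| + |g / (n:ℝ)| := by
          rw [hφ2_def]; exact norm_sub_le _ _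
    _ ≤ C := by
          rw [hC_def]
          have := abs_min_le c hc (γ * tau + x)
          linarith
  -- the decomposition functions
  set f : ℕ → Ω → ℝ := fun m ω => (if N' ω = m then (1:ℝ) else 0) * φ2 (Sm m ω) with hf_def
  have hf_meas : ∀ m, Measurable (f m) := by
    intro m
    apply Measurable.mul
    · exact Measurable.ite (hN'm (measurableSet_singleton m)) measurable_const measurable_const
    · exact hφ2_meas.comp (hSm_meas m)
  -- a.e. identification of Z with the tsum
  have hZae : (fun ω => Z ω) =ᵐ[Q] fun ω => ∑' m, f m ω := by
    filter_upwards [hWW', hNN', ae_all_iff.2 hYY'] with ω h1 h2 h3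
    rw [tsum_eq_single (N' ω) ?_]
    · have hXω : X ω = γ * tau + Sm (N' ω) ω := by
        rw [hX ω, h1, h2]
        have hsum : ∑ j ∈ Finset.range (N' ω), Y j ω = ∑ j ∈ Finset.range (N' ω), Y' j ω :=
          Finset.sum_congr rfl fun j _ => h3 j
        rw [hsum, hSm_def]
        ring
      simp only [hf_def, if_pos rfl, one_mul]
      rw [hZ ω, hXω, hφ2_def]
      simp
    · intro m hm
      simp only [hf_def]
      rw [if_neg fun h => hm h.symm, zero_mul]
  rw [integral_congr_ae hZae]
  -- interchange of sum and integral
  have hfsum : ∑' m, ∫⁻ ω, ‖f m ω‖₊ ∂Q ≠ ⊤ := by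
    have hb : ∀ m, ∫⁻ ω, ‖f m ω‖₊ ∂Q ≤ ENNReal.ofReal C * Q (N' ⁻¹' {m}) := by
      intro m
      have hpt : ∀ ω, (‖f m ω‖₊ : ℝ≥0∞)
          ≤ Set.indicator (N' ⁻¹' {m}) (fun _ => ENNReal.ofReal C) ω := by
        intro ω
        by_cases h : N' ω = m
        · rw [Set.indicator_of_mem (show ω ∈ N' ⁻¹' {m} from h)]
          simp only [hf_def, if_pos h, one_mul]
          rw [← enorm_eq_nnnorm, ← ofReal_norm]
          exact ENNReal.ofReal_le_ofReal (hφ2_bd _)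
        · rw [Set.indicator_of_notMem (show ω ∉ N' ⁻¹' {m} from h)]
          simp [hf_def, h]
      calc ∫⁻ ω, ‖f m ω‖₊ ∂Q
          ≤ ∫⁻ ω, Set.indicator (N' ⁻¹' {m}) (fun _ => ENNReal.ofReal C) ω ∂Q :=
            lintegral_mono hpt
        _ = ENNReal.ofReal C * Q (N' ⁻¹' {m}) := by
            rw [lintegral_indicator (hN'm (measurableSet_singleton m)), setLIntegral_const]
    have hQ1 : ∑' m, Q (N' ⁻¹' {m}) = 1 := by
      rw [← measure_iUnion (pairwise_disjoint_fiber N')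
        (fun m => hN'm (measurableSet_singleton m))]
      have : ⋃ m, N' ⁻¹' {m} = Set.univ := by
        ext ω
        simp only [Set.mem_iUnion, Set.mem_preimage, Set.mem_singleton_iff, Set.mem_univ, iff_true]
        exact ⟨N' ω, rfl⟩
      rw [this, measure_univ]
    refine ne_of_lt (lt_of_le_of_lt (ENNReal.tsum_le_tsum hb) ?_)
    rw [ENNReal.tsum_mul_left, hQ1, mul_one]
    exact ENNReal.ofReal_lt_top
  rw [integral_tsum (fun m => (hf_meas m).aestronglyMeasurable) hfsum]
  -- per-term computation
  set r : ℝ≥0 := (lam * tau).toNNReal with hr_def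
  have hrc : (r : ℝ) = lam * tau := Real.coe_toNNReal _ (by positivity)
  have hT : ∀ m : ℕ, ∫ ω, f m ω ∂Q
      = poissonPMFReal r m * (c - g / n)
        + Real.exp (-(lam * tau)) * ((lam * tau) ^ m / (m.factorial : ℝ) *
            (Real.exp ((γ + σ ^ 2 / 2) * tau + (μ + δ ^ 2 / 2) * m) *
                stdNormCDF ((Real.log (1 + c) - γ * tau - m * μ - σ ^ 2 * tau - m * δ ^ 2) /
                  Real.sqrt (σ ^ 2 * tau + m * δ ^ 2))
              - (1 + c) * stdNormCDF ((Real.log (1 + c) - γ * tau - m * μ) /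
                  Real.sqrt (σ ^ 2 * tau + m * δ ^ 2)))) := by
    intro m
    -- independence of the two factors
    have hIndm : IndepFun ((fun k : ℕ => if k = m then (1:ℝ) else 0) ∘ N') (φ2 ∘ Sm m) Q :=
      (indep_N_S hW'm hN'm hY'm hIndep' σ m).comp measurable_from_top hφ2_meas
    have hprod : ∫ ω, f m ω ∂Q
        = (∫ ω, ((fun k : ℕ => if k = m then (1:ℝ) else 0) ∘ N') ω ∂Q)
          * ∫ ω, (φ2 ∘ Sm m) ω ∂Q := by
      exact hIndm.integral_fun_mul_eq_mul_integral
        (Measurable.aestronglyMeasurable (measurable_from_top.comp hN'm))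
        (Measurable.aestronglyMeasurable (hφ2_meas.comp (hSm_meas m)))
    rw [hprod]
    -- first factor
    have hfst : ∫ ω, ((fun k : ℕ => if k = m then (1:ℝ) else 0) ∘ N') ω ∂Q
        = poissonPMFReal r m := by
      have hfun : ((fun k : ℕ => if k = m then (1:ℝ) else 0) ∘ N')
          = Set.indicator (N' ⁻¹' {m}) (fun _ => (1:ℝ)) := by
        funext ω
        by_cases h : N' ω = m <;> simp [Function.comp, Set.indicator, h]
      rw [hfun, integral_indicator_const (1:ℝ) (hN'm (measurableSet_singleton m)), smul_eq_mul,
        mul_one, measureReal_def, ← Measure.map_apply hN'm (measurableSet_singleton m), hN'law]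
      have hps : poissonMeasure r {m} = poissonPMF r m :=
        by rw [poissonMeasure_singleton]; rfl
      rw [hps]
      have : poissonPMF r m = ENNReal.ofReal (poissonPMFReal r m) := rfl
      rw [this, ENNReal.toReal_ofReal poissonPMFReal_nonneg]
    rw [hfst]
    -- second factor
    have hv : (σ ^ 2 * tau + m * δ ^ 2).toNNReal ≠ 0 := by
      simp only [ne_eq, Real.toNNReal_eq_zero, not_le]
      positivity
    have hvc : (((σ ^ 2 * tau + m * δ ^ 2).toNNReal : ℝ≥0) : ℝ) = σ ^ 2 * tau + m * δ ^ 2 :=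
      Real.coe_toNNReal _ (by positivity)
    have hsnd : ∫ ω, (φ2 ∘ Sm m) ω ∂Q
        = ∫ x, φ2 x ∂(gaussianReal (m * μ) ((σ ^ 2 * tau + m * δ ^ 2).toNNReal)) := by
      rw [← hSm_law m, integral_map (hSm_meas m).aemeasurable hφ2_meas.aestronglyMeasurable]
      rfl
    rw [hsnd]
    -- compute the gaussian integral of φ2
    have hmin_int : Integrable (fun x => min c (Real.exp (γ * tau + x) - 1))
        (gaussianReal (m * μ) ((σ ^ 2 * tau + m * δ ^ 2).toNNReal)) := by
      refine Integrable.mono' (integrable_const (max c 1)) ?_ (ae_of_all _ fun x => ?_)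
      · exact ((continuous_const.min ((Real.continuous_exp.comp
          (continuous_const.add continuous_id)).sub continuous_const))).measurable.aestronglyMeasurable
      · exact abs_min_le c hc _
    have hφ2_int : ∫ x, φ2 x ∂(gaussianReal (m * μ) ((σ ^ 2 * tau + m * δ ^ 2).toNNReal))
        = (∫ x, min c (Real.exp (γ * tau + x) - 1)
            ∂(gaussianReal (m * μ) ((σ ^ 2 * tau + m * δ ^ 2).toNNReal))) - g / n := by
      rw [hφ2_def]
      rw [integral_sub hmin_int (integrable_const _), integral_const, probReal_univ,
        one_smul]
    rw [hφ2_int]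
    have hmap2 : ∫ x, min c (Real.exp (γ * tau + x) - 1)
          ∂(gaussianReal (m * μ) ((σ ^ 2 * tau + m * δ ^ 2).toNNReal))
        = ∫ z, min c (Real.exp z - 1)
          ∂(gaussianReal (m * μ + γ * tau) ((σ ^ 2 * tau + m * δ ^ 2).toNNReal)) := by
      rw [← gaussianReal_map_const_add (γ * tau),
        integral_map (f := fun z : ℝ => min c (Real.exp z - 1)) (measurable_const_add (γ * tau)).aemeasurable
          (continuous_const.min ((Real.continuous_exp).sub continuous_const)).aestronglyMeasurable]
    rw [hmap2, key_integral _ _ hv c hc]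
    -- put everything in the required form
    have e1 : (Real.log (1 + c) - (m * μ + γ * tau))
        / Real.sqrt ((σ ^ 2 * tau + m * δ ^ 2).toNNReal : ℝ)
        = (Real.log (1 + c) - γ * tau - m * μ) / Real.sqrt (σ ^ 2 * tau + m * δ ^ 2) := by
      rw [hvc]; ring_nf
    have e2 : (Real.log (1 + c) - (m * μ + γ * tau) - ((σ ^ 2 * tau + m * δ ^ 2).toNNReal : ℝ))
        / Real.sqrt ((σ ^ 2 * tau + m * δ ^ 2).toNNReal : ℝ)
        = (Real.log (1 + c) - γ * tau - m * μ - σ ^ 2 * tau - m * δ ^ 2)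
          / Real.sqrt (σ ^ 2 * tau + m * δ ^ 2) := by
      rw [hvc]; ring_nf
    have e3 : (m * μ + γ * tau) + ((σ ^ 2 * tau + m * δ ^ 2).toNNReal : ℝ) / 2
        = (γ + σ ^ 2 / 2) * tau + (μ + δ ^ 2 / 2) * m := by
      rw [hvc]; ring
    rw [e1, e2, e3]
    have hp : poissonPMFReal r m = Real.exp (-(lam * tau)) * ((lam * tau) ^ m / (m.factorial : ℝ)) := by
      unfold poissonPMFReal
      rw [hrc]
      ring
    rw [hp]
    ring
  rw [tsum_congr hT]
  -- summability
  have hsum1 : Summable fun m : ℕ => poissonPMFReal r m * (c - g / n) :=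
    (poissonPMFRealSum r).summable.mul_right _
  set E1 : ℝ := Real.exp ((γ + σ ^ 2 / 2) * tau) with hE1_def
  set E2 : ℝ := Real.exp (μ + δ ^ 2 / 2) with hE2_def
  have hsumT : Summable fun m : ℕ => (lam * tau) ^ m / (m.factorial : ℝ) *
      (Real.exp ((γ + σ ^ 2 / 2) * tau + (μ + δ ^ 2 / 2) * m) *
          stdNormCDF ((Real.log (1 + c) - γ * tau - m * μ - σ ^ 2 * tau - m * δ ^ 2) /
            Real.sqrt (σ ^ 2 * tau + m * δ ^ 2))
        - (1 + c) * stdNormCDF ((Real.log (1 + c) - γ * tau - m * μ) /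
            Real.sqrt (σ ^ 2 * tau + m * δ ^ 2))) := by
    apply Summable.of_norm_bounded
      (g := fun m : ℕ => E1 * ((lam * tau * E2) ^ m / (m.factorial : ℝ))
        + (1 + c) * ((lam * tau) ^ m / (m.factorial : ℝ)))
    · exact ((Real.summable_pow_div_factorial (lam * tau * E2)).mul_left E1).add
        ((Real.summable_pow_div_factorial (lam * tau)).mul_left (1 + c))
    · intro m
      have hfac : (0:ℝ) < (m.factorial : ℝ) := by positivity
      have hpow : (0:ℝ) ≤ (lam * tau) ^ m / (m.factorial : ℝ) := by positivity
      rw [norm_mul, Real.norm_eq_abs, abs_of_nonneg hpow]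
      have hΦ1 : |stdNormCDF ((Real.log (1 + c) - γ * tau - m * μ - σ ^ 2 * tau - m * δ ^ 2) /
          Real.sqrt (σ ^ 2 * tau + m * δ ^ 2))| ≤ 1 := by
        rw [abs_of_nonneg (stdNormCDF_nonneg _)]; exact stdNormCDF_le_one _
      have hΦ2 : |stdNormCDF ((Real.log (1 + c) - γ * tau - m * μ) /
          Real.sqrt (σ ^ 2 * tau + m * δ ^ 2))| ≤ 1 := by
        rw [abs_of_nonneg (stdNormCDF_nonneg _)]; exact stdNormCDF_le_one _
      have hexp : Real.exp ((γ + σ ^ 2 / 2) * tau + (μ + δ ^ 2 / 2) * m) = E1 * E2 ^ m := by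
        rw [Real.exp_add, hE1_def, hE2_def, ← Real.exp_nat_mul]
        congr 1
        ring
      have hbnd : ‖Real.exp ((γ + σ ^ 2 / 2) * tau + (μ + δ ^ 2 / 2) * m) *
          stdNormCDF ((Real.log (1 + c) - γ * tau - m * μ - σ ^ 2 * tau - m * δ ^ 2) /
            Real.sqrt (σ ^ 2 * tau + m * δ ^ 2))
          - (1 + c) * stdNormCDF ((Real.log (1 + c) - γ * tau - m * μ) /
            Real.sqrt (σ ^ 2 * tau + m * δ ^ 2))‖ ≤ E1 * E2 ^ m + (1 + c) := by
        refine le_trans (norm_sub_le _ _) ?_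
        have hE : (0:ℝ) ≤ E1 * E2 ^ m := by positivity
        have h2 : |E1 * E2 ^ m| = E1 * E2 ^ m := abs_of_nonneg hE
        have h3 : |1 + c| = 1 + c := abs_of_nonneg (by linarith)
        rw [Real.norm_eq_abs, Real.norm_eq_abs, abs_mul, abs_mul, hexp, h2, h3]
        have h4 := abs_nonneg (stdNormCDF ((Real.log (1 + c) - γ * tau - m * μ - σ ^ 2 * tau - m * δ ^ 2) /
            Real.sqrt (σ ^ 2 * tau + m * δ ^ 2)))
        have h5 := abs_nonneg (stdNormCDF ((Real.log (1 + c) - γ * tau - m * μ) /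
            Real.sqrt (σ ^ 2 * tau + m * δ ^ 2)))
        nlinarith [hΦ1, hΦ2]
      calc (lam * tau) ^ m / (m.factorial : ℝ) * ‖_‖
          ≤ (lam * tau) ^ m / (m.factorial : ℝ) * (E1 * E2 ^ m + (1 + c)) :=
            mul_le_mul_of_nonneg_left hbnd hpow
        _ = E1 * ((lam * tau * E2) ^ m / (m.factorial : ℝ))
            + (1 + c) * ((lam * tau) ^ m / (m.factorial : ℝ)) := by
            rw [mul_pow]
            field_simp
            ring
  have hsum2 : Summable fun m : ℕ => Real.exp (-(lam * tau)) * ((lam * tau) ^ m / (m.factorial : ℝ) *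
      (Real.exp ((γ + σ ^ 2 / 2) * tau + (μ + δ ^ 2 / 2) * m) *
          stdNormCDF ((Real.log (1 + c) - γ * tau - m * μ - σ ^ 2 * tau - m * δ ^ 2) /
            Real.sqrt (σ ^ 2 * tau + m * δ ^ 2))
        - (1 + c) * stdNormCDF ((Real.log (1 + c) - γ * tau - m * μ) /
            Real.sqrt (σ ^ 2 * tau + m * δ ^ 2)))) := hsumT.mul_left _
  rw [Summable.tsum_add hsum1 hsum2, tsum_mul_right, (show HasSum (fun m => poissonPMFReal r m) 1 from poissonPMFRealSum r).tsum_eq, one_mul, tsum_mul_left]
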